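/- Let $r$ and $s$ be integers with $r \geq 3$ and $s \geq r-1$, and let $h : \{1,2,\dots\} \to \mathbb{Z}$ be a function satisfying $\min\{s,\, i(r-2)+1\} \leq h(i) \leq s$ for every $i \geq 1$. Then for every integer $N \geq 1$: $0 \leq \sum_{i=1}^{N}(i-1)\big(s - h(i)\big) \leq \frac{s^3}{3(r-2)^2}$ (as rational numbers). -/

import Mathlib

lemma sumform (T Q : ℚ) : ∀ M : ℕ, ∑ i ∈ Finset.Icc 1 M, ((i : ℚ) - 1) * (T - (i:ℚ)*Q)
    = T*M*(M-1)/2 - Q*M*(M-1)*(M+1)/3 := by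
  intro M
  induction M with
  | zero => simp
  | succ n ih =>
    rw [Finset.sum_Icc_succ_top (by omega), ih]
    push_cast
    ring

lemma polyineq (S T Q m : ℚ) (hQ : 1 ≤ Q) (hT : T = S - 1) (hm : 0 ≤ m)
    (hmQ : m * Q ≤ T) (hm2 : 2 ≤ m) :
    T*m*(m-1)/2 - Q*m*(m-1)*(m+1)/3 ≤ S ^ 3 / (3 * Q ^ 2) := by
  rw [div_sub_div _ _ (by norm_num) (by norm_num), div_le_div_iff₀ (by norm_num) (by positivity)]
  have he : 0 ≤ T - m * Q := by linarith
  have ha : (0:ℚ) < m * Q := mul_pos (by linarith) (by linarith)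
  have hb : (0:ℚ) < T - m * Q + 1 := by linarith
  have hf : (0:ℚ) ≤ m * Q - 2 * Q + 3 * (T - m * Q) := by
    nlinarith [mul_nonneg (by linarith : (0:ℚ) ≤ Q) (by linarith : (0:ℚ) ≤ m - 2)]
  have key1 : Q^2*m*(m-1)*(Q*(m-2)+3*(T-m*Q)) ≤ (m*Q)^2*((m*Q)+3*(T-m*Q)+3) := by
    have h1 : (0:ℚ) ≤ Q^2*m * (m*Q - 2*Q + 3*(T-m*Q)) :=
      mul_nonneg (mul_nonneg (sq_nonneg Q) hm) hf
    have h2 : (0:ℚ) ≤ (m*Q)^2 * (2*Q+3) := mul_nonneg (sq_nonneg _) (by linarith)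
    nlinarith [h1, h2]
  have key2 : (m*Q)^2*((m*Q)+3*(T-m*Q)+3) ≤ 2*S^3 := by
    have h1 : (0:ℚ) ≤ (m*Q)^3 := by positivity
    have h2 : (0:ℚ) ≤ (m*Q)^2*(T-m*Q+1) := mul_nonneg (sq_nonneg _) hb.le
    have h3 : (0:ℚ) ≤ (m*Q)*(T-m*Q+1)^2 := mul_nonneg ha.le (sq_nonneg _)
    have h4 : (0:ℚ) ≤ (T-m*Q+1)^3 := by positivity
    have hS : S = m*Q + (T-m*Q) + 1 := by linarith
    subst hS
    nlinarith [h1, h2, h3, h4]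
  nlinarith [key1, key2]

/-- Let `r` and `s` be integers with `r ≥ 3` and `s ≥ r-1`, and let `h` be an
integer-valued function on positive integers satisfying
`min s (i*(r-2)+1) ≤ h i ≤ s` for every `i ≥ 1`. Then for every integer `N ≥ 1`,
`0 ≤ ∑_{i=1}^{N} (i-1)*(s - h i) ≤ s^3/(3*(r-2)^2)` as rational numbers. -/
theorem stmt_10 (r s : ℤ) (hr : 3 ≤ r) (hs : r - 1 ≤ s) (h : ℕ → ℤ)
    (hh : ∀ i : ℕ, 1 ≤ i → min s ((i : ℤ) * (r - 2) + 1) ≤ h i ∧ h i ≤ s)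
    (N : ℕ) (hN : 1 ≤ N) :
    0 ≤ ∑ i ∈ Finset.Icc 1 N, ((i : ℚ) - 1) * ((s : ℚ) - (h i : ℚ)) ∧
      ∑ i ∈ Finset.Icc 1 N, ((i : ℚ) - 1) * ((s : ℚ) - (h i : ℚ))
        ≤ (s : ℚ) ^ 3 / (3 * ((r : ℚ) - 2) ^ 2) := by
  have hQ1 : (1:ℤ) ≤ r - 2 := by omega
  have hQ0 : (0:ℤ) < r - 2 := by omega
  have hT : r - 2 ≤ s - 1 := by omega
  constructor
  · apply Finset.sum_nonneg
    intro i hi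
    rw [Finset.mem_Icc] at hi
    have h1 := (hh i hi.1).2
    have : (1:ℚ) ≤ (i:ℚ) := by exact_mod_cast hi.1
    have : ((h i : ℚ)) ≤ (s:ℚ) := by exact_mod_cast h1
    nlinarith
  · -- upper bound
    set M : ℕ := min N ((s-1)/(r-2)).toNat with hMdef
    have hdiv0 : 0 ≤ (s-1)/(r-2) := Int.ediv_nonneg (by omega) (by omega)
    have hMN : M ≤ N := min_le_left _ _
    have step1 : ∑ i ∈ Finset.Icc 1 N, ((i : ℚ) - 1) * ((s : ℚ) - (h i : ℚ))
        ≤ ∑ i ∈ Finset.Icc 1 N,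
            (if i ≤ M then ((i:ℚ)-1) * (((s:ℚ)-1) - (i:ℚ)*((r:ℚ)-2)) else 0) := by
      apply Finset.sum_le_sum
      intro i hi
      rw [Finset.mem_Icc] at hi
      obtain ⟨hlo, hhi⟩ := hh i hi.1
      by_cases hiM : i ≤ M
      · simp only [hiM, if_true]
        have h1 : (i:ℤ) ≤ (s-1)/(r-2) := by
          have : i ≤ ((s-1)/(r-2)).toNat := le_trans hiM (min_le_right _ _)
          omega
        have h2 : (i:ℤ) * (r-2) ≤ s - 1 := (Int.le_ediv_iff_mul_le hQ0).mp h1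
        have h3 : (i:ℤ) * (r-2) + 1 ≤ h i := by
          refine le_trans ?_ hlo
          rw [min_eq_right (by omega)]
        have h4 : ((i:ℚ) * ((r:ℚ)-2) + 1) ≤ (h i : ℚ) := by exact_mod_cast h3
        have h5 : (1:ℚ) ≤ (i:ℚ) := by exact_mod_cast hi.1
        nlinarith
      · simp only [hiM, if_false]
        have hMlt : ((s-1)/(r-2)).toNat < i := by omega
        have h1 : (s-1)/(r-2) < (i:ℤ) := by omega
        have h2 : s - 1 < (i:ℤ) * (r-2) := by
          have := Int.lt_ediv_add_one_mul_self (s-1) hQ0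
          calc s - 1 < ((s-1)/(r-2) + 1) * (r-2) := this
            _ ≤ (i:ℤ) * (r-2) := by
                apply mul_le_mul_of_nonneg_right (by omega) (by omega)
        have h3 : s ≤ h i := by
          refine le_trans ?_ hlo
          rw [min_eq_left (by omega)]
        have h4 : h i = s := le_antisymm hhi h3
        simp [h4]
    have step2 : ∑ i ∈ Finset.Icc 1 N,
            (if i ≤ M then ((i:ℚ)-1) * (((s:ℚ)-1) - (i:ℚ)*((r:ℚ)-2)) else 0)
        = ∑ i ∈ Finset.Icc 1 M, ((i:ℚ)-1) * (((s:ℚ)-1) - (i:ℚ)*((r:ℚ)-2)) := by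
      rw [← Finset.sum_filter]
      congr 1
      ext i
      simp only [Finset.mem_filter, Finset.mem_Icc]
      omega
    rw [sumform] at step2
    refine le_trans step1 (le_trans step2.le ?_)
    by_cases hM2 : 2 ≤ M
    · apply polyineq
      · have : (3:ℚ) ≤ (r:ℚ) := by exact_mod_cast hr
        linarith
      · ring
      · positivity
      · have h1 : (M:ℤ) ≤ (s-1)/(r-2) := by
          have : M ≤ ((s-1)/(r-2)).toNat := min_le_right _ _
          omega
        have h2 : (M:ℤ) * (r-2) ≤ s - 1 := (Int.le_ediv_iff_mul_le hQ0).mp h1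
        have : ((M:ℚ)) * ((r:ℚ)-2) ≤ (s:ℚ) - 1 := by exact_mod_cast h2
        linarith
      · exact_mod_cast hM2
    · have hs0 : (0:ℚ) ≤ (s:ℚ) := by
        have : (0:ℤ) ≤ s := by omega
        exact_mod_cast this
      have hr2 : (0:ℚ) < (r:ℚ) - 2 := by
        have : (2:ℚ) < (r:ℚ) := by exact_mod_cast (by omega : (2:ℤ) < r)
        linarith
      have hrhs : (0:ℚ) ≤ (s : ℚ) ^ 3 / (3 * ((r : ℚ) - 2) ^ 2) := by positivity
      interval_cases M <;> norm_num <;> linarith
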